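/- There is a universal constant c₀ > 0 such that the following holds. Let p be an odd prime and let f : (ZMod p)^n → ℂ be a non-constant Boolean function (f(x) ∈ {−1,1} for all x) with spectral norm ‖f̂‖₁ = A. Let α be such that |f̂(α)| is maximal over all Fourier coefficients, β ≠ α such that |f̂(β)| is maximal over all γ ≠ α, and set η = β − α. Write L(λ) = ∑_{γ ∈ T} |∑_{k=0}^{p−1} ω^{λk}·f̂(γ + kη)| for the spectral norm of the restriction of f to {x : χ_η(x) = ω^λ}, where T is a set of coset representatives of ⟨η⟩ in (ZMod p)^n. Then: (1) for every λ ∈ ZMod p, L(λ) ≤ A − c₀·|f̂(β)|; and (2) there exist at least ⌊p/3⌋ distinct elements λ ∈ ZMod p with L(λ) ≤ A − c₀·|f̂(α)| ≤ A − c₀/A. -/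

import Mathlib

/-- `ω = exp(2πi/p)`, a primitive `p`-th root of unity. -/
noncomputable def pomega (p : ℕ) : ℂ :=
  Complex.exp (2 * Real.pi * Complex.I / p)

/-- The character `χ_α(x) = ω^{⟨α,x⟩}` on `(ZMod p)^n` (well-defined via `ZMod.val`
since `ω^p = 1`). -/
noncomputable def pchi (p n : ℕ) (α x : Fin n → ZMod p) : ℂ :=
  pomega p ^ (∑ i, α i * x i : ZMod p).val

/-- The Fourier coefficient `f̂(α) = p^{-n} ∑_x f(x) conj(χ_α(x))`. -/
noncomputable def phat (p n : ℕ) [NeZero p] (f : (Fin n → ZMod p) → ℂ)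
    (α : Fin n → ZMod p) : ℂ :=
  ((p : ℂ) ^ n)⁻¹ * ∑ x : Fin n → ZMod p, f x * (starRingEnd ℂ) (pchi p n α x)

set_option linter.unusedSectionVars false

namespace PML

open Complex Finset

noncomputable def E (p : ℕ) (s : ZMod p) : ℂ := pomega p ^ s.val

def dot {p n : ℕ} (γ x : Fin n → ZMod p) : ZMod p := ∑ i, γ i * x i

variable {p n : ℕ}

lemma pchi_eq (α x : Fin n → ZMod p) : pchi p n α x = E p (dot α x) := rfl

lemma prim (hp0 : p ≠ 0) : IsPrimitiveRoot (pomega p) p := by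
  simpa [pomega] using Complex.isPrimitiveRoot_exp p hp0

lemma pomega_pow_p (hp0 : p ≠ 0) : pomega p ^ p = 1 := (prim hp0).pow_eq_one

lemma pomega_pow_mod (hp0 : p ≠ 0) (m : ℕ) : pomega p ^ m = pomega p ^ (m % p) := by
  conv_lhs => rw [← Nat.mod_add_div m p]
  rw [pow_add, pow_mul, pomega_pow_p hp0, one_pow, mul_one]

lemma abs_pomega : ‖pomega p‖ = 1 := by
  have h : (2 * (Real.pi:ℂ) * Complex.I / p) = ((2 * Real.pi / p : ℝ) : ℂ) * Complex.I := by
    push_cast; ring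
  rw [pomega, h, Complex.norm_exp_ofReal_mul_I]

lemma abs_E (s : ZMod p) : ‖E p s‖ = 1 := by
  rw [E, norm_pow, abs_pomega, one_pow]

lemma E_ne_zero (s : ZMod p) : E p s ≠ 0 := by
  intro h
  have := abs_E (p := p) s
  rw [h] at this; simp at this

variable [NeZero p]

lemma E_zero : E p 0 = 1 := by simp [E]

lemma E_add (s t : ZMod p) : E p (s + t) = E p s * E p t := by
  rw [E, E, E, ZMod.val_add, ← pomega_pow_mod (NeZero.ne p), pow_add]

lemma E_ne_one {s : ZMod p} (hs : s ≠ 0) : E p s ≠ 1 := by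
  intro h
  have hd : p ∣ s.val := ((prim (NeZero.ne p)).pow_eq_one_iff_dvd s.val).mp h
  have h1 : s.val < p := ZMod.val_lt s
  have h2 : s.val ≠ 0 := by
    intro h0; exact hs ((ZMod.val_eq_zero s).mp h0)
  have := Nat.le_of_dvd (Nat.pos_of_ne_zero h2) hd
  omega

lemma conj_E (s : ZMod p) : (starRingEnd ℂ) (E p s) = E p (-s) := by
  have h1 : E p s * E p (-s) = 1 := by rw [← E_add]; simp [E_zero]
  have h2 : E p s * (starRingEnd ℂ) (E p s) = 1 := by
    rw [Complex.mul_conj]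
    have : Complex.normSq (E p s) = 1 := by
      have := Complex.sq_norm (E p s); rw [abs_E] at this; simpa using this.symm
    rw [this]; norm_num
  have := h1.trans h2.symm
  exact (mul_left_cancel₀ (E_ne_zero s) this).symm

lemma dot_comm (γ x : Fin n → ZMod p) : dot γ x = dot x γ := by
  simp [dot, mul_comm]

lemma dot_add_left (γ δ x : Fin n → ZMod p) : dot (γ + δ) x = dot γ x + dot δ x := by
  simp [dot, add_mul, Finset.sum_add_distrib]

lemma dot_sub_right (γ x y : Fin n → ZMod p) : dot γ (x - y) = dot γ x - dot γ y := by
  simp [dot, mul_sub, Finset.sum_sub_distrib]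

lemma dot_single_left (i : Fin n) (c : ZMod p) (x : Fin n → ZMod p) :
    dot (Pi.single i c) x = c * x i := by
  rw [dot, Finset.sum_eq_single i]
  · simp
  · intro j _ hj; simp [Pi.single_apply, hj]
  · simp

lemma sum_E_dot_left {z : Fin n → ZMod p} (hz : z ≠ 0) :
    ∑ γ : Fin n → ZMod p, E p (dot γ z) = 0 := by
  obtain ⟨i, hi⟩ : ∃ i, z i ≠ 0 := by
    by_contra h; push_neg at h; exact hz (funext h)
  have key : (∑ γ : Fin n → ZMod p, E p (dot (γ + Pi.single i 1) z))
      = ∑ γ : Fin n → ZMod p, E p (dot γ z) :=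
    Equiv.sum_comp (Equiv.addRight (Pi.single i 1)) (fun γ => E p (dot γ z))
  have key2 : (∑ γ : Fin n → ZMod p, E p (dot (γ + Pi.single i 1) z))
      = (∑ γ : Fin n → ZMod p, E p (dot γ z)) * E p (z i) := by
    rw [Finset.sum_mul]
    refine Finset.sum_congr rfl fun γ _ => ?_
    rw [dot_add_left, E_add, dot_single_left, one_mul]
  have hne := E_ne_one (p := p) hi
  have heq := key2.symm.trans key
  -- S * E = S  =>  S = 0
  by_contra hS
  exact hne (mul_left_cancel₀ hS (by rw [heq, mul_one]))

lemma sum_E_dot_right {z : Fin n → ZMod p} (hz : z ≠ 0) :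
    ∑ x : Fin n → ZMod p, E p (dot z x) = 0 := by
  have : ∀ x, E p (dot z x) = E p (dot x z) := fun x => by rw [dot_comm]
  rw [Finset.sum_congr rfl (fun x _ => this x)]
  exact sum_E_dot_left hz

lemma sum_E_dot_ite (z : Fin n → ZMod p) :
    ∑ γ : Fin n → ZMod p, E p (dot γ z) = if z = 0 then ((p:ℂ)^n) else 0 := by
  split_ifs with h
  · subst h
    have : ∀ γ : Fin n → ZMod p, E p (dot γ 0) = 1 := by
      intro γ; have : dot γ (0 : Fin n → ZMod p) = 0 := by simp [dot]
      rw [this, E_zero]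
    rw [Finset.sum_congr rfl (fun γ _ => this γ)]
    simp [Finset.card_univ, Fintype.card_fun, ZMod.card]
  · exact sum_E_dot_left h

/-- conj of phat normalization constant. -/
lemma conj_C : (starRingEnd ℂ) (((p:ℂ)^n)⁻¹) = ((p:ℂ)^n)⁻¹ := by
  simp

lemma phat_eq (f : (Fin n → ZMod p) → ℂ) (γ : Fin n → ZMod p) :
    phat p n f γ = ((p:ℂ)^n)⁻¹ * ∑ x : Fin n → ZMod p, f x * E p (- dot γ x) := by
  rw [phat]
  congr 1
  refine Finset.sum_congr rfl fun x _ => ?_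
  rw [pchi_eq, conj_E]

lemma conj_phat (f : (Fin n → ZMod p) → ℂ) (γ : Fin n → ZMod p) :
    (starRingEnd ℂ) (phat p n f γ)
      = ((p:ℂ)^n)⁻¹ * ∑ x : Fin n → ZMod p, (starRingEnd ℂ) (f x) * E p (dot γ x) := by
  rw [phat_eq, map_mul, conj_C, map_sum]
  congr 1
  refine Finset.sum_congr rfl fun x _ => ?_
  rw [map_mul, conj_E, neg_neg]

set_option maxHeartbeats 1000000 in
/-- Autocorrelation identity for Boolean functions. -/
lemma auto (f : (Fin n → ZMod p) → ℂ) (hf : ∀ x, f x = 1 ∨ f x = -1)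
    (δ : Fin n → ZMod p) :
    ∑ γ : Fin n → ZMod p, phat p n f γ * (starRingEnd ℂ) (phat p n f (γ + δ))
      = if δ = 0 then 1 else 0 := by
  classical
  have hp0 : (p:ℂ) ≠ 0 := Nat.cast_ne_zero.mpr (NeZero.ne p)
  have hf1 : ∀ x, f x * (starRingEnd ℂ) (f x) = 1 := by
    intro x; rcases hf x with h | h <;> rw [h] <;> simp
  have e1 : ∀ γ : Fin n → ZMod p, phat p n f γ * (starRingEnd ℂ) (phat p n f (γ + δ)) =
      ((p:ℂ)^n)⁻¹ * ((p:ℂ)^n)⁻¹ * ∑ x : Fin n → ZMod p, ∑ y : Fin n → ZMod p,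
        f x * (starRingEnd ℂ) (f y) * E p (dot δ y) * E p (dot γ (y - x)) := by
    intro γ
    rw [phat_eq, conj_phat, mul_mul_mul_comm, Finset.sum_mul_sum]
    congr 1
    refine Finset.sum_congr rfl fun x _ => Finset.sum_congr rfl fun y _ => ?_
    have h1 : E p (dot (γ + δ) y) = E p (dot γ y) * E p (dot δ y) := by
      rw [← E_add, dot_add_left]
    have h2 : E p (dot γ (y - x)) = E p (- dot γ x) * E p (dot γ y) := by
      rw [← E_add, dot_sub_right]; ring_nf
    rw [h1, h2]; ring
  rw [Finset.sum_congr rfl (fun γ _ => e1 γ), ← Finset.mul_sum, Finset.sum_comm]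
  have e2 : ∀ x : Fin n → ZMod p,
      (∑ γ : Fin n → ZMod p, ∑ y : Fin n → ZMod p,
        f x * (starRingEnd ℂ) (f y) * E p (dot δ y) * E p (dot γ (y - x)))
      = (p:ℂ)^n * E p (dot δ x) := by
    intro x
    rw [Finset.sum_comm]
    have e3 : ∀ y : Fin n → ZMod p,
        (∑ γ : Fin n → ZMod p,
          f x * (starRingEnd ℂ) (f y) * E p (dot δ y) * E p (dot γ (y - x)))
        = if y = x then f x * (starRingEnd ℂ) (f y) * E p (dot δ y) * ((p:ℂ)^n) else 0 := by
      intro y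
      rw [← Finset.mul_sum]
      have hsum : (∑ γ : Fin n → ZMod p, E p (dot γ (y - x)))
          = if y - x = 0 then ((p:ℂ)^n) else 0 := sum_E_dot_ite (y - x)
      rw [hsum]
      by_cases h : y = x
      · rw [if_pos (by rw [h, sub_self]), if_pos h]
      · rw [if_neg (fun hh => h (sub_eq_zero.mp hh)), if_neg h, mul_zero]
    rw [Finset.sum_congr rfl (fun y _ => e3 y), Finset.sum_ite_eq' Finset.univ x _,
      if_pos (Finset.mem_univ x), hf1 x, one_mul, mul_comm]
  rw [Finset.sum_congr rfl (fun x _ => e2 x), ← Finset.mul_sum]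
  have hlast : (∑ x : Fin n → ZMod p, E p (dot δ x)) = if δ = 0 then ((p:ℂ)^n) else 0 := by
    split_ifs with h
    · subst h
      have : ∀ x : Fin n → ZMod p, E p (dot (0 : Fin n → ZMod p) x) = 1 := by
        intro x
        have h0 : dot (0 : Fin n → ZMod p) x = 0 := by simp [dot]
        rw [h0, E_zero]
      rw [Finset.sum_congr rfl (fun x _ => this x)]
      simp [Finset.card_univ, Fintype.card_fun, ZMod.card]
    · exact sum_E_dot_right h
  rw [hlast]
  split_ifs with h
  · have hpn : ((p:ℂ)^n) ≠ 0 := pow_ne_zero _ hp0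
    field_simp
  · simp

/-- Parseval for Boolean functions. -/
lemma parseval (f : (Fin n → ZMod p) → ℂ) (hf : ∀ x, f x = 1 ∨ f x = -1) :
    ∑ γ : Fin n → ZMod p, (‖phat p n f γ‖)^2 = 1 := by
  have h := auto f hf 0
  rw [if_pos rfl] at h
  have h2 : ∀ γ : Fin n → ZMod p, phat p n f γ * (starRingEnd ℂ) (phat p n f (γ + 0))
      = ((‖phat p n f γ‖)^2 : ℝ) := by
    intro γ
    rw [add_zero, Complex.mul_conj, Complex.sq_norm]
  rw [Finset.sum_congr rfl (fun γ _ => h2 γ)] at h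
  exact_mod_cast (by exact_mod_cast h : ((∑ γ : Fin n → ZMod p, (‖phat p n f γ‖)^2 : ℝ) : ℂ) = 1)

/-- Real symmetry: for ±1-valued f, `f̂(-γ) = conj (f̂ γ)`. -/
lemma phat_neg (f : (Fin n → ZMod p) → ℂ) (hf : ∀ x, f x = 1 ∨ f x = -1)
    (γ : Fin n → ZMod p) :
    phat p n f (-γ) = (starRingEnd ℂ) (phat p n f γ) := by
  have hfr : ∀ x, (starRingEnd ℂ) (f x) = f x := by
    intro x; rcases hf x with h | h <;> rw [h] <;> simp
  rw [conj_phat, phat_eq]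
  congr 1
  refine Finset.sum_congr rfl fun x _ => ?_
  rw [hfr x]
  congr 1
  have : dot (-γ) x = - dot γ x := by simp [dot, Finset.sum_neg_distrib]
  rw [this, neg_neg]

/-- Key two-term inequality. -/
lemma pair_ineq (u v : ℂ) (M : ℝ) (hM : 0 < M)
    (h : ‖u‖ + ‖v‖ ≤ M) :
    ‖u‖ * ‖v‖ - (u * (starRingEnd ℂ) v).re
      ≤ M * (‖u‖ + ‖v‖ - ‖u + v‖) := by
  have h1 : (‖u+v‖)^2 = (‖u‖)^2 + (‖v‖)^2
      + 2 * (u * (starRingEnd ℂ) v).re := by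
    rw [Complex.sq_norm, Complex.sq_norm, Complex.sq_norm, Complex.normSq_add]
  have h2 : (u * (starRingEnd ℂ) v).re ≤ ‖u‖ * ‖v‖ := by
    calc (u * (starRingEnd ℂ) v).re ≤ ‖u * (starRingEnd ℂ) v‖ := Complex.re_le_norm _
    _ = ‖u‖ * ‖v‖ := by rw [norm_mul, Complex.norm_conj]
  have h3 : ‖u + v‖ ≤ ‖u‖ + ‖v‖ := norm_add_le u v
  have h4 : (0:ℝ) ≤ ‖u+v‖ := norm_nonneg _
  nlinarith [sq_nonneg (‖u‖ - ‖v‖)]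

omit [NeZero p] in
lemma dl_nonneg (F : (Fin n → ZMod p) → ℂ) (l : ZMod p) (γ η : Fin n → ZMod p) :
    0 ≤ ‖F γ‖ + ‖F (γ + η)‖
        - ‖F γ + E p l * F (γ + η)‖ := by
  have h := norm_add_le (F γ) (E p l * F (γ + η))
  rw [norm_mul, abs_E, one_mul] at h
  linarith

end PML

section Cyc
open Finset

/-- pairing helper -/
lemma sum_range_two_mul {M : Type*} [AddCommMonoid M] (m : ℕ) (g : ℕ → M) :
    ∑ k ∈ Finset.range (2*m), g k = ∑ i ∈ Finset.range m, (g (2*i) + g (2*i+1)) := by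
  induction m with
  | zero => simp
  | succ m ih =>
      have h2 : 2*(m+1) = (2*m) + 1 + 1 := by ring
      rw [h2, Finset.sum_range_succ, Finset.sum_range_succ, ih, Finset.sum_range_succ,
        add_assoc]

/-- Cyclic 3-matching inequality. -/
lemma cyc_ineq (m : ℕ) (hm : 1 ≤ m) (u : ℕ → ℂ) (hu : u (2*m+1) = u 0) :
    ∑ k ∈ Finset.range (2*m+1),
        (‖u k‖ + ‖u (k+1)‖ - ‖u k + u (k+1)‖)
      ≤ 3 * ((∑ k ∈ Finset.range (2*m+1), ‖u k‖)
          - ‖∑ k ∈ Finset.range (2*m+1), u k‖) := by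
  set d : ℕ → ℝ := fun k => ‖u k‖ + ‖u (k+1)‖ - ‖u k + u (k+1)‖ with hd
  set S : ℝ := ∑ k ∈ Finset.range (2*m+1), ‖u k‖ with hS
  set Sc : ℂ := ∑ k ∈ Finset.range (2*m+1), u k with hSc
  have ineq1 : ∑ i ∈ Finset.range m, d (2*i) ≤ S - ‖Sc‖ := by
    have dec1 : Sc = (∑ i ∈ Finset.range m, (u (2*i) + u (2*i+1))) + u (2*m) := by
      rw [hSc, Finset.sum_range_succ, sum_range_two_mul]
    have dec1a : S = (∑ i ∈ Finset.range m,
        (‖u (2*i)‖ + ‖u (2*i+1)‖)) + ‖u (2*m)‖ := by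
      rw [hS, Finset.sum_range_succ, sum_range_two_mul]
    have habs : ‖Sc‖ ≤ (∑ i ∈ Finset.range m,
        ‖u (2*i) + u (2*i+1)‖) + ‖u (2*m)‖ := by
      rw [dec1]
      refine le_trans (norm_add_le _ _) ?_
      gcongr
      exact norm_sum_le _ _
    have hsplit : ∑ i ∈ Finset.range m, d (2*i)
        = (∑ i ∈ Finset.range m, (‖u (2*i)‖ + ‖u (2*i+1)‖))
          - ∑ i ∈ Finset.range m, ‖u (2*i) + u (2*i+1)‖ := by
      rw [← Finset.sum_sub_distrib]
    rw [hsplit, dec1a]; linarith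
  have ineq2 : ∑ i ∈ Finset.range m, d (2*i+1) ≤ S - ‖Sc‖ := by
    have dec2 : Sc = (∑ i ∈ Finset.range m, (u (2*i+1) + u (2*i+1+1))) + u 0 := by
      rw [hSc, Finset.sum_range_succ', sum_range_two_mul]
    have dec2a : S = (∑ i ∈ Finset.range m,
        (‖u (2*i+1)‖ + ‖u (2*i+1+1)‖)) + ‖u 0‖ := by
      rw [hS, Finset.sum_range_succ', sum_range_two_mul]
    have habs : ‖Sc‖ ≤ (∑ i ∈ Finset.range m,
        ‖u (2*i+1) + u (2*i+1+1)‖) + ‖u 0‖ := by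
      rw [dec2]
      refine le_trans (norm_add_le _ _) ?_
      gcongr
      exact norm_sum_le _ _
    have hsplit : ∑ i ∈ Finset.range m, d (2*i+1)
        = (∑ i ∈ Finset.range m, (‖u (2*i+1)‖ + ‖u (2*i+1+1)‖))
          - ∑ i ∈ Finset.range m, ‖u (2*i+1) + u (2*i+1+1)‖ := by
      rw [← Finset.sum_sub_distrib]
    rw [hsplit, dec2a]; linarith
  have ineq3 : d (2*m) ≤ S - ‖Sc‖ := by
    have h2m : 2*m = (2*m-1)+1 := by omega
    have e : ∑ k ∈ Finset.range (2*m), u k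
        = (∑ k ∈ Finset.range (2*m-1), u (k+1)) + u 0 := by
      conv_lhs => rw [h2m]
      exact Finset.sum_range_succ' u (2*m-1)
    have ea : ∑ k ∈ Finset.range (2*m), ‖u k‖
        = (∑ k ∈ Finset.range (2*m-1), ‖u (k+1)‖) + ‖u 0‖ := by
      conv_lhs => rw [h2m]
      exact Finset.sum_range_succ' (fun k => ‖u k‖) (2*m-1)
    have dec3 : Sc = (u (2*m) + u 0) + ∑ k ∈ Finset.range (2*m-1), u (k+1) := by
      rw [hSc, Finset.sum_range_succ, e]; ring
    have dec3a : S = (‖u (2*m)‖ + ‖u 0‖)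
        + ∑ k ∈ Finset.range (2*m-1), ‖u (k+1)‖ := by
      rw [hS, Finset.sum_range_succ, ea]; ring
    have habs : ‖Sc‖ ≤ ‖u (2*m) + u 0‖
        + ∑ k ∈ Finset.range (2*m-1), ‖u (k+1)‖ := by
      rw [dec3]
      refine le_trans (norm_add_le _ _) ?_
      gcongr
      exact norm_sum_le _ _
    have hdm : d (2*m) = ‖u (2*m)‖ + ‖u 0‖
        - ‖u (2*m) + u 0‖ := by
      have : 2*m+1 = 2*m+1 := rfl
      simp only [hd]
      rw [hu]
    rw [hdm, dec3a]; linarith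
  have hdsum : ∑ k ∈ Finset.range (2*m+1), d k
      = (∑ i ∈ Finset.range m, d (2*i)) + (∑ i ∈ Finset.range m, d (2*i+1)) + d (2*m) := by
    rw [Finset.sum_range_succ, sum_range_two_mul m d, Finset.sum_add_distrib]
  calc ∑ k ∈ Finset.range (2*m+1), d k
      = (∑ i ∈ Finset.range m, d (2*i)) + (∑ i ∈ Finset.range m, d (2*i+1)) + d (2*m) := hdsum
    _ ≤ 3 * (S - ‖Sc‖) := by linarith

end Cyc

namespace PML

open Complex Finset

variable {p n : ℕ} [NeZero p]

lemma sum_range_zmod {M : Type*} [AddCommMonoid M] (W : ZMod p → M) :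
    ∑ k ∈ Finset.range p, W (k : ZMod p) = ∑ k : ZMod p, W k := by
  refine Finset.sum_nbij' (fun k => ((k:ℕ) : ZMod p)) (fun s => s.val) ?_ ?_ ?_ ?_ ?_
  · intro k _; exact Finset.mem_univ _
  · intro s _; exact Finset.mem_range.mpr (ZMod.val_lt s)
  · intro k hk; exact ZMod.val_cast_of_lt (Finset.mem_range.mp hk)
  · intro s _; exact ZMod.natCast_rightInverse s
  · intro k _; rfl

lemma smul_eta_inj (hp : p.Prime) {η : Fin n → ZMod p} (hη : η ≠ 0)
    {k k' : ZMod p} (h : k • η = k' • η) : k = k' := by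
  haveI : Fact p.Prime := ⟨hp⟩
  obtain ⟨i, hi⟩ : ∃ i, η i ≠ 0 := by
    by_contra hc; push_neg at hc; exact hη (funext hc)
  have h2 := congrFun h i
  simp only [Pi.smul_apply, smul_eq_mul] at h2
  have h3 : (k - k') * η i = 0 := by rw [sub_mul, h2, sub_self]
  rcases mul_eq_zero.mp h3 with h4 | h4
  · exact sub_eq_zero.mp h4
  · exact absurd h4 hi

lemma coset_decomp (hp : p.Prime) {η : Fin n → ZMod p} (hη : η ≠ 0)
    (T : Finset (Fin n → ZMod p))
    (hT : ∀ γ : Fin n → ZMod p, ∃! t, t ∈ T ∧ ∃ k : ZMod p, γ = t + k • η)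
    {M : Type*} [AddCommMonoid M] (G : (Fin n → ZMod p) → M) :
    ∑ t ∈ T, ∑ k : ZMod p, G (t + k • η) = ∑ γ : Fin n → ZMod p, G γ := by
  classical
  have hrep : ∀ γ : Fin n → ZMod p, ∃ tk : (Fin n → ZMod p) × ZMod p,
      tk.1 ∈ T ∧ γ = tk.1 + tk.2 • η := by
    intro γ
    obtain ⟨t, ⟨ht, k, hk⟩, -⟩ := hT γ
    exact ⟨(t, k), ht, hk⟩
  choose rep hrepT hrepEq using hrep
  rw [← Finset.sum_product' T Finset.univ (fun t k => G (t + k • η))]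
  refine Finset.sum_nbij' (fun tk : (Fin n → ZMod p) × ZMod p => tk.1 + tk.2 • η) rep
    ?_ ?_ ?_ ?_ ?_
  · intro tk _; exact Finset.mem_univ _
  · intro γ _; exact Finset.mem_product.mpr ⟨hrepT γ, Finset.mem_univ _⟩
  · intro tk htk
    obtain ⟨ht, -⟩ := Finset.mem_product.mp htk
    obtain ⟨t0, ht0, huniq⟩ := hT (tk.1 + tk.2 • η)
    have e1 : (rep (tk.1 + tk.2 • η)).1 = t0 :=
      huniq _ ⟨hrepT _, (rep (tk.1 + tk.2 • η)).2, hrepEq _⟩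
    have e2 : tk.1 = t0 := huniq _ ⟨ht, tk.2, rfl⟩
    have et : (rep (tk.1 + tk.2 • η)).1 = tk.1 := e1.trans e2.symm
    have hk := hrepEq (tk.1 + tk.2 • η)
    rw [et] at hk
    have hsm : (rep (tk.1 + tk.2 • η)).2 • η = tk.2 • η := (add_left_cancel hk.symm)
    have hkk : (rep (tk.1 + tk.2 • η)).2 = tk.2 := smul_eta_inj hp hη hsm
    exact Prod.ext et hkk
  · intro γ _; exact (hrepEq γ).symm
  · intro tk _; rfl

end PML

namespace PML

open Complex Finset

set_option maxHeartbeats 2000000 in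
lemma core {p n : ℕ} [NeZero p] (hp : p.Prime) (hp2 : p ≠ 2)
    (f : (Fin n → ZMod p) → ℂ) (hbool : ∀ x, f x = 1 ∨ f x = -1)
    (hnc : ∃ x y, f x ≠ f y)
    (α β : Fin n → ZMod p)
    (hαmax : ∀ γ, ‖phat p n f γ‖ ≤ ‖phat p n f α‖)
    (hβne : β ≠ α)
    (hβmax : ∀ γ, γ ≠ α → ‖phat p n f γ‖ ≤ ‖phat p n f β‖)
    (T : Finset (Fin n → ZMod p))
    (hT : ∀ γ : Fin n → ZMod p, ∃! t, t ∈ T ∧ ∃ k : ZMod p, γ = t + k • (β - α)) :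
    (∀ l : ZMod p,
        (∑ γ ∈ T, ‖∑ k ∈ Finset.range p,
            pomega p ^ (l.val * k) * phat p n f (γ + k • (β - α))‖)
          ≤ (∑ γ : Fin n → ZMod p, ‖phat p n f γ‖)
            - (1/6 : ℝ) * ‖phat p n f β‖) ∧
      (∃ S : Finset (ZMod p), p / 3 ≤ S.card ∧
        ∀ l ∈ S,
          (∑ γ ∈ T, ‖∑ k ∈ Finset.range p,
              pomega p ^ (l.val * k) * phat p n f (γ + k • (β - α))‖)
            ≤ (∑ γ : Fin n → ZMod p, ‖phat p n f γ‖)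
              - (1/6 : ℝ) * ‖phat p n f α‖ ∧
          (∑ γ : Fin n → ZMod p, ‖phat p n f γ‖)
            - (1/6 : ℝ) * ‖phat p n f α‖
            ≤ (∑ γ : Fin n → ZMod p, ‖phat p n f γ‖)
              - (1/6 : ℝ) / (∑ γ : Fin n → ZMod p, ‖phat p n f γ‖)) := by
  classical
  haveI : Fact p.Prime := ⟨hp⟩
  haveI : Fact (1 < p) := ⟨hp.one_lt⟩
  have hp3 : 3 ≤ p := by
    have := hp.two_le; omega
  obtain ⟨m, hmm⟩ : ∃ m, p = 2*m+1 := by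
    obtain ⟨m, hm⟩ := hp.odd_of_ne_two hp2
    exact ⟨m, by omega⟩
  have hm1 : 1 ≤ m := by omega
  set F : (Fin n → ZMod p) → ℂ := phat p n f with hF
  set η : Fin n → ZMod p := β - α with hηdef
  have hη : η ≠ 0 := sub_ne_zero.mpr hβne
  have hβαη : α + η = β := by rw [hηdef]; ring
  set a : ℝ := ‖F α‖ with ha
  set b : ℝ := ‖F β‖ with hb
  set A : ℝ := ∑ γ : Fin n → ZMod p, ‖F γ‖ with hA
  have hpar := parseval f hbool
  have hab : b ≤ a := hαmax β
  have hb0 : (0:ℝ) ≤ b := norm_nonneg _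
  have ha0' : (0:ℝ) ≤ a := norm_nonneg _
  have hA0 : (0:ℝ) ≤ A := Finset.sum_nonneg fun γ _ => norm_nonneg _
  have haA : 1 ≤ a * A := by
    have h1 : (1:ℝ) = ∑ γ : Fin n → ZMod p, (‖F γ‖)^2 := hpar.symm
    have h2 : ∑ γ : Fin n → ZMod p, (‖F γ‖)^2
        ≤ ∑ γ : Fin n → ZMod p, a * ‖F γ‖ := by
      refine Finset.sum_le_sum fun γ _ => ?_
      have h3 := hαmax γ
      have h4 := norm_nonneg (F γ)
      nlinarith
    rw [h1, ← Finset.mul_sum (a := a)] at *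
    linarith
  have ha0 : (0:ℝ) < a := by
    rcases ha0'.lt_or_eq with h | h
    · exact h
    · exfalso; rw [← h, zero_mul] at haA; linarith
  have hA1 : (0:ℝ) < A := by nlinarith
  have hw : ∑ γ : Fin n → ZMod p, F γ * (starRingEnd ℂ) (F (γ + η)) = 0 := by
    have := auto f hbool η
    rwa [if_neg hη] at this
  -- loss functional
  set Dl : ZMod p → (Fin n → ZMod p) → ℝ := fun l γ =>
    ‖F γ‖ + ‖F (γ + η)‖
      - ‖F γ + E p l * F (γ + η)‖ with hDl
  have hDl0 : ∀ l γ, 0 ≤ Dl l γ := fun l γ => dl_nonneg F l γ η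
  -- the key loss bound
  have hLb : ∀ l : ZMod p,
      ∑ γ : Fin n → ZMod p, Dl l γ
        ≤ 3 * (A - (∑ γ ∈ T, ‖∑ k ∈ Finset.range p,
            pomega p ^ (l.val * k) * F (γ + k • η)‖)) := by
    intro l
    have percoset : ∀ t ∈ T,
        ∑ k : ZMod p, Dl l (t + k • η)
          ≤ 3 * ((∑ k : ZMod p, ‖F (t + k • η)‖)
            - ‖∑ k ∈ Finset.range p, pomega p ^ (l.val * k) * F (t + k • η)‖) := by
      intro t _
      set u : ℕ → ℂ := fun k => E p (l * ((k:ℕ) : ZMod p)) * F (t + ((k:ℕ) : ZMod p) • η) with hu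
      have hup : u (2*m+1) = u 0 := by
        have hc : ((2*m+1 : ℕ) : ZMod p) = 0 := by
          rw [← hmm]; exact ZMod.natCast_self p
        simp only [hu, hc, Nat.cast_zero, mul_zero, zero_smul, add_zero]
      have hcyc := cyc_ineq m hm1 u hup
      rw [← hmm] at hcyc
      have conv1 : ∑ k ∈ Finset.range p, pomega p ^ (l.val * k) * F (t + k • η)
          = ∑ k ∈ Finset.range p, u k := by
        refine Finset.sum_congr rfl fun k hk => ?_
        have hk' : k < p := Finset.mem_range.mp hk
        have e1 : pomega p ^ (l.val * k) = E p (l * ((k:ℕ) : ZMod p)) := by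
          rw [E, ZMod.val_mul, ZMod.val_natCast, Nat.mod_eq_of_lt hk']
          exact pomega_pow_mod (NeZero.ne p) _
        have e2 : k • η = ((k:ℕ) : ZMod p) • η := (Nat.cast_smul_eq_nsmul (ZMod p) k η).symm
        rw [e1, e2]
      have conv2 : ∑ k ∈ Finset.range p, ‖u k‖
          = ∑ k : ZMod p, ‖F (t + k • η)‖ := by
        have hcong : ∀ k ∈ Finset.range p,
            ‖u k‖ = ‖F (t + ((k:ℕ):ZMod p) • η)‖ := by
          intro k _; simp only [hu, norm_mul, abs_E, one_mul]
        rw [Finset.sum_congr rfl hcong]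
        exact sum_range_zmod (fun s => ‖F (t + s • η)‖)
      have hedge : ∀ k : ℕ,
          ‖u k‖ + ‖u (k+1)‖ - ‖u k + u (k+1)‖
            = Dl l (t + ((k:ℕ):ZMod p) • η) := by
        intro k
        have hc : ((k+1:ℕ) : ZMod p) = ((k:ℕ):ZMod p) + 1 := by push_cast; ring
        have e3 : u (k+1) = E p (l * ((k:ℕ):ZMod p)) * (E p l * F ((t + ((k:ℕ):ZMod p) • η) + η)) := by
          simp only [hu, hc]
          rw [mul_add, mul_one, E_add, add_smul, one_smul, ← add_assoc]
          ring
        have e4 : u k + u (k+1) = E p (l * ((k:ℕ):ZMod p)) *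
            (F (t + ((k:ℕ):ZMod p) • η) + E p l * F ((t + ((k:ℕ):ZMod p) • η) + η)) := by
          rw [e3]; simp only [hu]; ring
        rw [e4, e3]
        simp only [hu, hDl, norm_mul, abs_E, one_mul]
      have conv3 : ∑ k ∈ Finset.range p,
          (‖u k‖ + ‖u (k+1)‖ - ‖u k + u (k+1)‖)
            = ∑ k : ZMod p, Dl l (t + k • η) := by
        rw [Finset.sum_congr rfl (fun k _ => hedge k)]
        exact sum_range_zmod (fun s => Dl l (t + s • η))
      rw [conv3, conv2, ← conv1] at hcyc
      exact hcyc
    have hs1 : ∑ t ∈ T, ∑ k : ZMod p, Dl l (t + k • η)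
        = ∑ γ : Fin n → ZMod p, Dl l γ := coset_decomp hp hη T hT (Dl l)
    have hs2 : ∑ t ∈ T, ∑ k : ZMod p, ‖F (t + k • η)‖ = A := by
      rw [hA]; exact coset_decomp hp hη T hT (fun γ => ‖F γ‖)
    calc ∑ γ : Fin n → ZMod p, Dl l γ
        = ∑ t ∈ T, ∑ k : ZMod p, Dl l (t + k • η) := hs1.symm
      _ ≤ ∑ t ∈ T, 3 * ((∑ k : ZMod p, ‖F (t + k • η)‖)
            - ‖∑ k ∈ Finset.range p, pomega p ^ (l.val * k) * F (t + k • η)‖) :=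
          Finset.sum_le_sum percoset
      _ = 3 * (A - (∑ γ ∈ T, ‖∑ k ∈ Finset.range p,
            pomega p ^ (l.val * k) * F (γ + k • η)‖)) := by
          rw [← hs2, ← Finset.mul_sum, Finset.sum_sub_distrib]
  -- pairwise numerator bound
  have hpairnum : ∀ (l : ZMod p) (γ : Fin n → ZMod p) (M : ℝ), 0 < M →
      ‖F γ‖ + ‖F (γ + η)‖ ≤ M →
      ‖F γ‖ * ‖F (γ + η)‖
        - ((starRingEnd ℂ) (E p l) * (F γ * (starRingEnd ℂ) (F (γ + η)))).re
        ≤ M * Dl l γ := by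
    intro l γ M hM hle
    have h := pair_ineq (F γ) (E p l * F (γ + η)) M hM
      (by rwa [norm_mul, abs_E, one_mul])
    rw [norm_mul, abs_E, one_mul] at h
    have e1 : F γ * (starRingEnd ℂ) (E p l * F (γ + η))
        = (starRingEnd ℂ) (E p l) * (F γ * (starRingEnd ℂ) (F (γ + η))) := by
      rw [map_mul]; ring
    rw [e1] at h
    exact h
  -- part 1 core: A - LHS l ≥ b/3
  have hpart1 : ∀ l : ZMod p,
      (∑ γ ∈ T, ‖∑ k ∈ Finset.range p,
          pomega p ^ (l.val * k) * F (γ + k • η)‖) ≤ A - (1/3) * b := by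
    intro l
    have hnum : ∀ γ ∈ (Finset.univ : Finset (Fin n → ZMod p)),
        ‖F γ‖ * ‖F (γ + η)‖
          - ((starRingEnd ℂ) (E p l) * (F γ * (starRingEnd ℂ) (F (γ + η)))).re
          ≤ (2*a) * Dl l γ := by
      intro γ _
      exact hpairnum l γ (2*a) (by linarith)
        (by have := hαmax γ; have := hαmax (γ + η); linarith)
    have hsums := Finset.sum_le_sum hnum
    have hre0 : ∑ γ : Fin n → ZMod p,
        ((starRingEnd ℂ) (E p l) * (F γ * (starRingEnd ℂ) (F (γ + η)))).re = 0 := by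
      rw [← Complex.re_sum, ← Finset.mul_sum, hw, mul_zero, Complex.zero_re]
    have hW : 2*(a*b) ≤ ∑ γ : Fin n → ZMod p,
        ‖F γ‖ * ‖F (γ + η)‖ := by
      have habsw : ∀ γ : Fin n → ZMod p,
          ‖F γ * (starRingEnd ℂ) (F (γ + η))‖
            = ‖F γ‖ * ‖F (γ + η)‖ := fun γ => by
        rw [norm_mul, Complex.norm_conj]
      have herased : ∑ γ ∈ Finset.univ.erase α, F γ * (starRingEnd ℂ) (F (γ + η))
          = -(F α * (starRingEnd ℂ) (F (α + η))) := by
        have h := (Finset.add_sum_erase Finset.univ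
          (fun γ => F γ * (starRingEnd ℂ) (F (γ + η))) (Finset.mem_univ α)).trans hw
        linear_combination h
      have h1 : ‖F α * (starRingEnd ℂ) (F (α + η))‖ = a*b := by
        rw [habsw, hβαη]
      have h2 : a*b ≤ ∑ γ ∈ Finset.univ.erase α,
          ‖F γ‖ * ‖F (γ + η)‖ := by
        calc a*b = ‖-(F α * (starRingEnd ℂ) (F (α + η)))‖ := by
              rw [norm_neg, h1]
          _ = ‖∑ γ ∈ Finset.univ.erase α, F γ * (starRingEnd ℂ) (F (γ + η))‖ := by
              rw [herased]
          _ ≤ ∑ γ ∈ Finset.univ.erase α, ‖F γ * (starRingEnd ℂ) (F (γ + η))‖ :=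
              norm_sum_le _ _
          _ = ∑ γ ∈ Finset.univ.erase α, ‖F γ‖ * ‖F (γ + η)‖ :=
              Finset.sum_congr rfl fun γ _ => habsw γ
      have h3 : ∑ γ : Fin n → ZMod p, ‖F γ‖ * ‖F (γ + η)‖
          = ‖F α‖ * ‖F (α + η)‖
            + ∑ γ ∈ Finset.univ.erase α, ‖F γ‖ * ‖F (γ + η)‖ :=
        (Finset.add_sum_erase Finset.univ
          (fun γ => ‖F γ‖ * ‖F (γ + η)‖) (Finset.mem_univ α)).symm
      have h4 : ‖F α‖ * ‖F (α + η)‖ = a*b := by rw [hβαη]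
      rw [h3, h4]
      linarith
    rw [Finset.sum_sub_distrib, hre0, sub_zero, ← Finset.mul_sum] at hsums
    have hlb := hLb l
    nlinarith
  have chain2 : A - (1/6:ℝ)*a ≤ A - (1/6:ℝ)/A := by
    have h1 : (1/6:ℝ)/A ≤ (1/6)*a := by
      rw [div_le_iff₀ hA1]; nlinarith
    linarith
  refine ⟨fun l => by have h1 := hpart1 l; nlinarith, ?_⟩
  rcases eq_or_ne α 0 with hα0 | hα0
  · -- dominant coefficient at 0
    subst hα0
    have hβη : β = η := by rw [← hβαη, zero_add]
    -- second coefficient is nonzero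
    have hb_pos : (0:ℝ) < b := by
      rcases hb0.lt_or_eq with h | h
      · exact h
      · exfalso
        have hz : ∀ γ : Fin n → ZMod p, γ ≠ 0 → F γ = 0 := by
          intro γ hγ
          have h1 := hβmax γ hγ
          rw [← h] at h1
          exact norm_eq_zero.mp (le_antisymm h1 (norm_nonneg _))
        have hone : (‖F 0‖)^2 = 1 := by
          have hsng : ∑ γ : Fin n → ZMod p, (‖F γ‖)^2
              = (‖F 0‖)^2 := by
            apply Finset.sum_eq_single (0 : Fin n → ZMod p)
            · intro γ _ hγ; rw [hz γ hγ]; simp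
            · intro h0; exact absurd (Finset.mem_univ _) h0
          rw [← hsng]
          rw [hF] at *
          exact hpar
        have ha1 : ‖F 0‖ = 1 := by
          nlinarith [norm_nonneg (F 0)]
        have hpn : ((p:ℂ)^n) ≠ 0 := pow_ne_zero _ (Nat.cast_ne_zero.mpr (NeZero.ne p))
        have hsum_fx : ∑ x : Fin n → ZMod p, f x = (p:ℂ)^n * F 0 := by
          have hchi : ∀ x : Fin n → ZMod p, (starRingEnd ℂ) (pchi p n 0 x) = 1 := by
            intro x
            rw [pchi_eq]
            have h0 : dot (0 : Fin n → ZMod p) x = 0 := by simp [dot]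
            rw [h0, E_zero, map_one]
          have e : F 0 = ((p:ℂ)^n)⁻¹ * ∑ x : Fin n → ZMod p, f x := by
            rw [hF, phat]
            congr 1
            exact Finset.sum_congr rfl fun x _ => by rw [hchi x, mul_one]
          rw [e]
          field_simp
        have hre : ∑ x : Fin n → ZMod p, ((starRingEnd ℂ) (F 0) * f x).re = (p:ℝ)^n := by
          rw [← Complex.re_sum, ← Finset.mul_sum, hsum_fx]
          have e3 : ((starRingEnd ℂ) (F 0) * ((p:ℂ)^n * F 0)) = ((p:ℝ)^n : ℂ) := by
            have e4 : F 0 * (starRingEnd ℂ) (F 0) = ((‖F 0‖)^2 : ℝ) := by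
              rw [Complex.mul_conj, Complex.sq_norm]
            calc (starRingEnd ℂ) (F 0) * ((p:ℂ)^n * F 0)
                = (p:ℂ)^n * (F 0 * (starRingEnd ℂ) (F 0)) := by ring
              _ = (p:ℂ)^n * ((‖F 0‖)^2 : ℝ) := by rw [e4]
              _ = ((p:ℝ)^n : ℂ) := by rw [ha1]; push_cast; ring
          rw [e3, ← Complex.ofReal_pow, Complex.ofReal_re]
        have hterm : ∀ x : Fin n → ZMod p, ((starRingEnd ℂ) (F 0) * f x).re ≤ 1 := by
          intro x
          calc ((starRingEnd ℂ) (F 0) * f x).re ≤ ‖(starRingEnd ℂ) (F 0) * f x‖ :=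
                Complex.re_le_norm _
            _ = ‖F 0‖ * ‖f x‖ := by
                rw [norm_mul, Complex.norm_conj]
            _ ≤ 1 := by
                rw [ha1, one_mul]
                rcases hbool x with h' | h' <;> rw [h'] <;> simp
        have hall : ∀ x : Fin n → ZMod p, ((starRingEnd ℂ) (F 0) * f x).re = 1 := by
          by_contra hcon
          push_neg at hcon
          obtain ⟨x0, hx0⟩ := hcon
          have hlt : ((starRingEnd ℂ) (F 0) * f x0).re < 1 :=
            lt_of_le_of_ne (hterm x0) hx0
          have hslt := Finset.sum_lt_sum (fun x _ => hterm x)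
            ⟨x0, Finset.mem_univ x0, hlt⟩
          rw [hre] at hslt
          have hcard : ∑ _x : Fin n → ZMod p, (1:ℝ) = (p:ℝ)^n := by
            rw [Finset.sum_const, Finset.card_univ]
            simp [Fintype.card_fun, ZMod.card]
          rw [hcard] at hslt
          exact lt_irrefl _ hslt
        obtain ⟨x, y, hxy⟩ := hnc
        have hx1 := hall x
        have hy1 := hall y
        rcases hbool x with hx | hx <;> rcases hbool y with hy | hy
        · exact hxy (hx.trans hy.symm)
        · rw [hx, mul_one] at hx1
          rw [hy, mul_neg_one, Complex.neg_re] at hy1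
          linarith
        · rw [hx, mul_neg_one, Complex.neg_re] at hx1
          rw [hy, mul_one] at hy1
          linarith
        · exact hxy (hx.trans hy.symm)
    -- the distinguished correlation
    set ζ : ℂ := F 0 * (starRingEnd ℂ) (F η) with hζ
    have habsζ : ‖ζ‖ = a * b := by
      rw [hζ, norm_mul, Complex.norm_conj, ha, hb, hβη]
    have hne0 : -η + η = 0 := by abel
    have hF0real : (starRingEnd ℂ) (F 0) = F 0 := by
      have h := phat_neg f hbool 0
      rw [neg_zero] at h
      rw [hF]
      exact h.symm
    have hFnegη : F (-η) = (starRingEnd ℂ) (F η) := by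
      rw [hF]; exact phat_neg f hbool η
    have hw0 : F 0 * (starRingEnd ℂ) (F (0 + η)) = ζ := by rw [zero_add, hζ]
    have hwneg : F (-η) * (starRingEnd ℂ) (F (-η + η)) = ζ := by
      rw [hne0, hFnegη, hF0real, hζ]; ring
    have hmemneg : -η ∈ Finset.univ.erase (0 : Fin n → ZMod p) :=
      Finset.mem_erase.mpr ⟨neg_ne_zero.mpr hη, Finset.mem_univ _⟩
    have e1 : F 0 * (starRingEnd ℂ) (F (0 + η))
        + ∑ γ ∈ Finset.univ.erase (0 : Fin n → ZMod p), F γ * (starRingEnd ℂ) (F (γ + η))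
        = ∑ γ : Fin n → ZMod p, F γ * (starRingEnd ℂ) (F (γ + η)) :=
      Finset.add_sum_erase Finset.univ (fun γ => F γ * (starRingEnd ℂ) (F (γ + η)))
        (Finset.mem_univ (0 : Fin n → ZMod p))
    have e2 : F (-η) * (starRingEnd ℂ) (F (-η + η))
        + ∑ γ ∈ (Finset.univ.erase (0 : Fin n → ZMod p)).erase (-η),
            F γ * (starRingEnd ℂ) (F (γ + η))
        = ∑ γ ∈ Finset.univ.erase (0 : Fin n → ZMod p), F γ * (starRingEnd ℂ) (F (γ + η)) :=
      Finset.add_sum_erase _ (fun γ => F γ * (starRingEnd ℂ) (F (γ + η))) hmemneg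
    rw [hw, hw0] at e1
    rw [hwneg] at e2
    have hsum_others : ∑ γ ∈ (Finset.univ.erase (0 : Fin n → ZMod p)).erase (-η),
        F γ * (starRingEnd ℂ) (F (γ + η)) = -(2*ζ) := by
      linear_combination e1 + e2
    -- counting the good frequencies
    have hsumE : ∑ l : ZMod p, E p l = 0 := by
      have key : (∑ l : ZMod p, E p (l + 1)) = ∑ l : ZMod p, E p l :=
        Equiv.sum_comp (Equiv.addRight (1 : ZMod p)) (E p)
      have key2 : (∑ l : ZMod p, E p (l + 1)) = (∑ l : ZMod p, E p l) * E p 1 := by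
        rw [Finset.sum_mul]
        exact Finset.sum_congr rfl fun l _ => by rw [E_add]
      have h1 : (1 : ZMod p) ≠ 0 := one_ne_zero
      have heq : (∑ l : ZMod p, E p l) * E p 1 = ∑ l : ZMod p, E p l := key2.symm.trans key
      by_contra hS
      exact E_ne_one h1 (mul_left_cancel₀ hS (by rw [heq, mul_one]))
    have hre0 : ∑ l : ZMod p, ((starRingEnd ℂ) (E p l) * ζ).re = 0 := by
      rw [← Complex.re_sum, ← Finset.sum_mul, ← map_sum, hsumE, map_zero, zero_mul,
        Complex.zero_re]
    have hterm_le : ∀ l : ZMod p, ((starRingEnd ℂ) (E p l) * ζ).re ≤ a*b := by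
      intro l
      calc ((starRingEnd ℂ) (E p l) * ζ).re ≤ ‖(starRingEnd ℂ) (E p l) * ζ‖ :=
            Complex.re_le_norm _
        _ = a*b := by rw [norm_mul, Complex.norm_conj, abs_E, one_mul, habsζ]
    set S : Finset (ZMod p) :=
      Finset.univ.filter (fun l : ZMod p => -(a*b)/2 ≤ ((starRingEnd ℂ) (E p l) * ζ).re)
      with hSdef
    have habpos : (0:ℝ) < a*b := mul_pos ha0 hb_pos
    have hScard : p / 3 ≤ S.card := by
      by_cases hSu : S = Finset.univ
      · rw [hSu, Finset.card_univ, ZMod.card]; exact Nat.div_le_self p 3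
      · have hnecompl : ((Finset.univ : Finset (ZMod p)) \ S).Nonempty := by
          rw [Finset.sdiff_nonempty]
          intro hsub
          exact hSu (Finset.Subset.antisymm (Finset.subset_univ S) hsub)
        have hstrict : ∑ l ∈ Finset.univ \ S, ((starRingEnd ℂ) (E p l) * ζ).re
            < ∑ _l ∈ Finset.univ \ S, (-(a*b)/2) := by
          refine Finset.sum_lt_sum_of_nonempty hnecompl ?_
          intro l hl
          have hlnot : ¬ (-(a*b)/2 ≤ ((starRingEnd ℂ) (E p l) * ζ).re) := by
            rw [Finset.mem_sdiff] at hl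
            intro hc
            exact hl.2 (by rw [hSdef]; exact Finset.mem_filter.mpr ⟨Finset.mem_univ _, hc⟩)
          exact lt_of_not_ge hlnot
        have hSle : ∑ l ∈ S, ((starRingEnd ℂ) (E p l) * ζ).re ≤ (S.card : ℝ) * (a*b) := by
          have h := Finset.sum_le_card_nsmul S _ (a*b) (fun l _ => hterm_le l)
          rwa [nsmul_eq_mul] at h
        have htot : ∑ l ∈ Finset.univ \ S, ((starRingEnd ℂ) (E p l) * ζ).re
            + ∑ l ∈ S, ((starRingEnd ℂ) (E p l) * ζ).re = 0 := by
          rw [Finset.sum_sdiff (Finset.subset_univ S)]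
          exact hre0
        have hconst : ∑ _l ∈ Finset.univ \ S, (-(a*b)/2 : ℝ)
            = ((Finset.univ \ S).card : ℝ) * (-(a*b)/2) := by
          rw [Finset.sum_const, nsmul_eq_mul]
        have hSle' : S.card ≤ p := by
          have h := Finset.card_le_card (Finset.subset_univ S)
          rwa [Finset.card_univ, ZMod.card] at h
        have hcards : ((Finset.univ \ S).card : ℝ) = (p:ℝ) - S.card := by
          rw [Finset.card_sdiff_of_subset (Finset.subset_univ S), Finset.card_univ, ZMod.card,
            Nat.cast_sub hSle']
        rw [hconst, hcards] at hstrict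
        have hp3s : (p:ℝ) < 3 * S.card := by nlinarith
        have hp3s' : p < 3 * S.card := by exact_mod_cast hp3s
        omega
    refine ⟨S, hScard, ?_⟩
    intro l hl
    have hlre : -(a*b)/2 ≤ ((starRingEnd ℂ) (E p l) * ζ).re := by
      rw [hSdef] at hl
      exact (Finset.mem_filter.mp hl).2
    refine ⟨?_, chain2⟩
    have hmem_others : ∀ γ ∈ (Finset.univ.erase (0 : Fin n → ZMod p)).erase (-η),
        γ ≠ 0 ∧ γ + η ≠ 0 := by
      intro γ hγ
      have h1 := Finset.mem_of_mem_erase hγ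
      have h2 := Finset.ne_of_mem_erase hγ
      have h3 := Finset.ne_of_mem_erase h1
      exact ⟨h3, fun hc => h2 (eq_neg_of_add_eq_zero_left hc)⟩
    have hnum2 : ∀ γ ∈ (Finset.univ.erase (0 : Fin n → ZMod p)).erase (-η),
        ‖F γ‖ * ‖F (γ + η)‖
          - ((starRingEnd ℂ) (E p l) * (F γ * (starRingEnd ℂ) (F (γ + η)))).re
          ≤ (2*b) * Dl l γ := by
      intro γ hγ
      obtain ⟨h1, h2⟩ := hmem_others γ hγ
      exact hpairnum l γ (2*b) (by linarith)
        (by have q1 := hβmax γ h1; have q2 := hβmax (γ + η) h2; linarith)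
    have hre_o : ∑ γ ∈ (Finset.univ.erase (0 : Fin n → ZMod p)).erase (-η),
        ((starRingEnd ℂ) (E p l) * (F γ * (starRingEnd ℂ) (F (γ + η)))).re
          = -2 * ((starRingEnd ℂ) (E p l) * ζ).re := by
      rw [← Complex.re_sum, ← Finset.mul_sum, hsum_others]
      have e : (starRingEnd ℂ) (E p l) * -(2*ζ)
          = ((-2 : ℝ) : ℂ) * ((starRingEnd ℂ) (E p l) * ζ) := by push_cast; ring
      rw [e, Complex.re_ofReal_mul]
    have habs_o : 2*(a*b) ≤ ∑ γ ∈ (Finset.univ.erase (0 : Fin n → ZMod p)).erase (-η),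
        ‖F γ‖ * ‖F (γ + η)‖ := by
      calc 2*(a*b) = ‖-(2*ζ)‖ := by
            rw [norm_neg, norm_mul, Complex.norm_two, habsζ]
        _ = ‖∑ γ ∈ (Finset.univ.erase (0 : Fin n → ZMod p)).erase (-η),
              F γ * (starRingEnd ℂ) (F (γ + η))‖ := by rw [hsum_others]
        _ ≤ ∑ γ ∈ (Finset.univ.erase (0 : Fin n → ZMod p)).erase (-η),
              ‖F γ * (starRingEnd ℂ) (F (γ + η))‖ := norm_sum_le _ _
        _ = ∑ γ ∈ (Finset.univ.erase (0 : Fin n → ZMod p)).erase (-η),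
              ‖F γ‖ * ‖F (γ + η)‖ :=
            Finset.sum_congr rfl fun γ _ => by rw [norm_mul, Complex.norm_conj]
    have hsum_num : a*b ≤ ∑ γ ∈ (Finset.univ.erase (0 : Fin n → ZMod p)).erase (-η),
        (‖F γ‖ * ‖F (γ + η)‖
          - ((starRingEnd ℂ) (E p l) * (F γ * (starRingEnd ℂ) (F (γ + η)))).re) := by
      rw [Finset.sum_sub_distrib, hre_o]
      linarith
    have h4 := Finset.sum_le_sum hnum2
    have h5 : ∑ γ ∈ (Finset.univ.erase (0 : Fin n → ZMod p)).erase (-η), (2*b) * Dl l γ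
        = (2*b) * ∑ γ ∈ (Finset.univ.erase (0 : Fin n → ZMod p)).erase (-η), Dl l γ :=
      (Finset.mul_sum _ _ _).symm
    have h6 : ∑ γ ∈ (Finset.univ.erase (0 : Fin n → ZMod p)).erase (-η), Dl l γ
        ≤ ∑ γ : Fin n → ZMod p, Dl l γ :=
      Finset.sum_le_sum_of_subset_of_nonneg (Finset.subset_univ _) (fun γ _ _ => hDl0 l γ)
    have h7 := hLb l
    have hb2 : (0:ℝ) ≤ 2*b := by linarith
    have h8 := mul_le_mul_of_nonneg_left h6 hb2
    have h9 := mul_le_mul_of_nonneg_left h7 hb2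
    nlinarith
  · -- α ≠ 0 : second coefficient equals the first
    have hneg : -α ≠ α := by
      intro hc
      apply hα0
      funext i
      have hci := congrFun hc i
      have h3 : α i + α i = 0 := by
        have : -(α i) = α i := hci
        linear_combination -this
      have h4 : (2 : ZMod p) * α i = 0 := by rw [two_mul]; exact h3
      have h5 : (2 : ZMod p) ≠ 0 := by
        intro h6
        have h7 : ((2:ℕ) : ZMod p) = 0 := by exact_mod_cast h6
        have h8 := (ZMod.natCast_eq_zero_iff 2 p).mp h7
        have h9 := Nat.le_of_dvd (by norm_num) h8
        omega
      rcases mul_eq_zero.mp h4 with h | h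
      · exact absurd h h5
      · exact h
    have hba : a ≤ b := by
      have he : ‖F (-α)‖ = a := by
        rw [ha, hF, phat_neg f hbool α, Complex.norm_conj]
      calc a = ‖F (-α)‖ := he.symm
        _ ≤ b := hβmax (-α) hneg
    have hbeq : b = a := le_antisymm hab hba
    refine ⟨Finset.univ, ?_, ?_⟩
    · rw [Finset.card_univ, ZMod.card]; exact Nat.div_le_self p 3
    · intro l _
      refine ⟨?_, chain2⟩
      have h1 := hpart1 l
      rw [hbeq] at h1
      nlinarith

end PML

/-- **Lemma 4.1** (Main Lemma over `ZMod p`, items 1 and 2): there is a universal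
constant `c₀ > 0` such that for a non-constant Boolean `f : (ZMod p)^n → {−1,1}`
(`p` an odd prime) with spectral norm `A`, largest coefficient `f̂(α)` and second
largest `f̂(β)`, writing `η = β − α` and
`L(λ) = ∑_{γ ∈ T} |∑_{k<p} ω^{λk} f̂(γ+kη)|` for the spectral norm of the
restriction to `{x : χ_η(x) = ω^λ}` (`T` a set of coset representatives of `⟨η⟩`):
(1) `L(λ) ≤ A − c₀|f̂(β)|` for every `λ`, and (2) at least `⌊p/3⌋` distinct
`λ ∈ ZMod p` satisfy `L(λ) ≤ A − c₀|f̂(α)| ≤ A − c₀/A`. -/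
theorem p_main_lemma : ∃ c₀ : ℝ, 0 < c₀ ∧
    ∀ (p n : ℕ) (hp : p.Prime), p ≠ 2 →
    haveI : NeZero p := ⟨hp.ne_zero⟩
    ∀ (f : (Fin n → ZMod p) → ℂ), (∀ x, f x = 1 ∨ f x = -1) →
    (∃ x y, f x ≠ f y) →
    ∀ A : ℝ, (∑ γ : Fin n → ZMod p, ‖phat p n f γ‖) = A →
    ∀ α β : Fin n → ZMod p,
      (∀ γ, ‖phat p n f γ‖ ≤ ‖phat p n f α‖) →
      β ≠ α →
      (∀ γ, γ ≠ α → ‖phat p n f γ‖ ≤ ‖phat p n f β‖) →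
    ∀ T : Finset (Fin n → ZMod p),
      (∀ γ : Fin n → ZMod p, ∃! t, t ∈ T ∧ ∃ k : ZMod p, γ = t + k • (β - α)) →
      (∀ l : ZMod p,
        (∑ γ ∈ T, ‖∑ k ∈ Finset.range p,
            pomega p ^ (l.val * k) * phat p n f (γ + k • (β - α))‖)
          ≤ A - c₀ * ‖phat p n f β‖) ∧
      (∃ S : Finset (ZMod p), p / 3 ≤ S.card ∧
        ∀ l ∈ S,
          (∑ γ ∈ T, ‖∑ k ∈ Finset.range p,
              pomega p ^ (l.val * k) * phat p n f (γ + k • (β - α))‖)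
            ≤ A - c₀ * ‖phat p n f α‖ ∧
          A - c₀ * ‖phat p n f α‖ ≤ A - c₀ / A) := by
  refine ⟨1/6, by norm_num, ?_⟩
  intro p n hp hp2
  haveI : NeZero p := ⟨hp.ne_zero⟩
  intro f hbool hnc A hA α β hαmax hβne hβmax T hT
  subst hA
  exact PML.core hp hp2 f hbool hnc α β hαmax hβne hβmax T hT
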